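/- Let m, n₁,…,n_l be positive integers, n := m + n₁ + ⋯ + n_l, and let T be the polynomial ring over 𝔽₂ = ℤ/2 in the indeterminates α₁,…,α_m and β_i^{(p)} for 1 ≤ p ≤ l, 1 ≤ i ≤ ⌊n_p/2⌋. With the conventions α₀ := 1, α_i := α_{2m+1−i} for m < i ≤ 2m+1, α_i := 0 for i < 0 or i > 2m+1, β_0^{(p)} := 1, β_i^{(p)} := β_{n_p−i}^{(p)} for ⌊n_p/2⌋ < i ≤ n_p, β_i^{(p)} := 0 for i < 0 or i > n_p, define μ_j := Σ_{a₁+⋯+a_l = j} β_{a₁}^{(1)}⋯β_{a_l}^{(l)} and ξ_k := Σ_{i=0}^{⌊k/2⌋} α_{k−2i}·μ_i + (binom(2n+1, k) mod 2). Let B ⊆ T be the subring generated by all the β_i^{(p)}. Then for every j ≥ 0 with 2j+1 ≤ m, the element α_{2j+1} + α_{2j} is a B-linear combination of ξ₁,…,ξ_m; in particular α_{2j+1} + α_{2j} lies in the ideal (ξ₁,…,ξ_m) of T. -/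

import Mathlib

open MvPolynomial

/-- A sequence (given as a list) `a₁, …, aₙ` in a commutative ring `A` is `A`-regular if for
each `i`, `aᵢ` is not a zero divisor on `A ⧸ (a₁, …, a_{i-1})`. -/
def IsRegularSeq {A : Type*} [CommRing A] (l : List A) : Prop :=
  ∀ (i : ℕ) (h : i < l.length), ∀ x : A,
    l.get ⟨i, h⟩ * x ∈ Ideal.span {y | y ∈ l.take i} →
      x ∈ Ideal.span {y | y ∈ l.take i}

/-- The element `α_i` of the polynomial ring `T` over `𝔽₂` in the indeterminates
`α₁, …, α_m` and `β_i^{(p)}`, with the conventions `α_0 = 1`, `α_i = α_{2m+1−i}` for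
`m < i ≤ 2m+1`, and `α_i = 0` for `i > 2m+1`. -/
noncomputable def alT (m l : ℕ) (n : Fin l → ℕ) (i : ℕ) :
    MvPolynomial (Fin m ⊕ Σ p : Fin l, Fin (n p / 2)) (ZMod 2) :=
  if h : i ≤ 2 * m + 1 then
    (if h1 : 1 ≤ min i (2 * m + 1 - i) then
      X (Sum.inl ⟨min i (2 * m + 1 - i) - 1, by omega⟩) else 1)
  else 0

/-- The element `β_i^{(p)}` of `T`, with the conventions `β_0^{(p)} = 1`,
`β_i^{(p)} = β_{n_p−i}^{(p)}` for `⌊n_p/2⌋ < i ≤ n_p`, and `β_i^{(p)} = 0` for `i > n_p`. -/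
noncomputable def beT (m l : ℕ) (n : Fin l → ℕ) (p : Fin l) (i : ℕ) :
    MvPolynomial (Fin m ⊕ Σ p : Fin l, Fin (n p / 2)) (ZMod 2) :=
  if h : i ≤ n p then
    (if h1 : 1 ≤ min i (n p - i) then X (Sum.inr ⟨p, ⟨min i (n p - i) - 1, by omega⟩⟩) else 1)
  else 0

/-- `μ_j := Σ_{a₁+⋯+a_l = j} β_{a₁}^{(1)} ⋯ β_{a_l}^{(l)}`. -/
noncomputable def muT (m l : ℕ) (n : Fin l → ℕ) (j : ℕ) :
    MvPolynomial (Fin m ⊕ Σ p : Fin l, Fin (n p / 2)) (ZMod 2) :=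
  ∑ a ∈ (Fintype.piFinset fun _ : Fin l => Finset.range (j + 1)).filter
      (fun a => ∑ p, a p = j),
    ∏ p, beT m l n p (a p)

/-- `ξ_k := Σ_{i=0}^{⌊k/2⌋} α_{k−2i}·μ_i + (binom(2n+1, k) mod 2)`, with
`n = m + n₁ + ⋯ + n_l`. -/
noncomputable def xiT (m l : ℕ) (n : Fin l → ℕ) (k : ℕ) :
    MvPolynomial (Fin m ⊕ Σ p : Fin l, Fin (n p / 2)) (ZMod 2) :=
  (∑ i ∈ Finset.range (k / 2 + 1), alT m l n (k - 2 * i) * muT m l n i) +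
    (Nat.choose (2 * (m + ∑ p, n p) + 1) k :
      MvPolynomial (Fin m ⊕ Σ p : Fin l, Fin (n p / 2)) (ZMod 2))

/-- The subring `B ⊆ T` generated by all the indeterminates `β_i^{(p)}`. -/
noncomputable def BsubT (m l : ℕ) (n : Fin l → ℕ) :
    Subring (MvPolynomial (Fin m ⊕ Σ p : Fin l, Fin (n p / 2)) (ZMod 2)) :=
  Subring.closure (Set.range fun v : Σ p : Fin l, Fin (n p / 2) => X (Sum.inr v))

section Aux

variable (m l : ℕ) (n : Fin l → ℕ)

local notation "T" => MvPolynomial (Fin m ⊕ Σ p : Fin l, Fin (n p / 2)) (ZMod 2)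

lemma two_torsion (x : T) : x + x = 0 := by
  rw [← two_mul]
  have h2 : (2 : T) = ((2 : ℕ) : T) := by norm_num
  rw [h2, CharP.cast_eq_zero_iff T 2 2 |>.mpr (dvd_refl 2), zero_mul]

lemma beT_mem (p : Fin l) (i : ℕ) : beT m l n p i ∈ BsubT m l n := by
  unfold beT
  split_ifs with h h1
  · exact Subring.subset_closure ⟨⟨p, ⟨min i (n p - i) - 1, by omega⟩⟩, rfl⟩
  · exact one_mem _
  · exact zero_mem _

lemma muT_mem (j : ℕ) : muT m l n j ∈ BsubT m l n := by
  unfold muT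
  exact Subring.sum_mem _ fun a _ => Subring.prod_mem _ fun p _ => beT_mem m l n p (a p)

lemma beT_zero (p : Fin l) : beT m l n p 0 = 1 := by
  unfold beT
  rw [dif_pos (Nat.zero_le _), dif_neg (by omega)]

lemma alT_zero : alT m l n 0 = 1 := by
  unfold alT
  rw [dif_pos (by omega), dif_neg (by omega)]

lemma muT_zero : muT m l n 0 = 1 := by
  unfold muT
  have hset : (Fintype.piFinset fun _ : Fin l => Finset.range 1).filter
      (fun a => ∑ p, a p = 0) = {fun _ => 0} := by
    ext a
    simp only [Finset.mem_filter, Fintype.mem_piFinset, Finset.mem_range, Nat.lt_one_iff,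
      Finset.mem_singleton, funext_iff]
    constructor
    · rintro ⟨h, _⟩; exact h
    · intro h; exact ⟨h, Finset.sum_eq_zero fun p _ => h p⟩
  rw [hset, Finset.sum_singleton]
  exact Finset.prod_eq_one fun p _ => beT_zero m l n p

lemma xiT_zero : xiT m l n 0 = 0 := by
  unfold xiT
  rw [show (0 : ℕ) / 2 + 1 = 1 from rfl, Finset.sum_range_one, Nat.choose_zero_right,
    alT_zero, muT_zero, one_mul, Nat.cast_one]
  exact two_torsion m l n 1

lemma choose_cancel (N k : ℕ) :
    ((Nat.choose (2 * N + 1) (2 * k + 1) : T) + (Nat.choose (2 * N + 1) (2 * k) : T)) = 0 := by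
  have hpas : Nat.choose (2 * N + 2) (2 * k + 1)
      = Nat.choose (2 * N + 1) (2 * k) + Nat.choose (2 * N + 1) (2 * k + 1) :=
    Nat.choose_succ_succ (2 * N + 1) (2 * k)
  have heven : 2 ∣ Nat.choose (2 * N + 2) (2 * k + 1) := by
    have h := Nat.add_one_mul_choose_eq (2 * N + 1) (2 * k)
    have h2 : 2 ∣ Nat.choose (2 * N + 2) (2 * k + 1) * (2 * k + 1) := by
      rw [← h]
      exact ⟨(N + 1) * Nat.choose (2 * N + 1) (2 * k), by ring⟩
    rcases (Nat.Prime.dvd_mul Nat.prime_two).mp h2 with h3 | h3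
    · exact h3
    · omega
  have : ((Nat.choose (2 * N + 1) (2 * k) + Nat.choose (2 * N + 1) (2 * k + 1) : ℕ) : T) = 0 := by
    rw [← hpas]
    exact (CharP.cast_eq_zero_iff T 2 _).mpr heven
  push_cast at this
  linear_combination this

lemma xi_pair (k : ℕ) :
    xiT m l n (2 * k + 1) + xiT m l n (2 * k)
      = ∑ i ∈ Finset.range (k + 1),
          (alT m l n (2 * (k - i) + 1) + alT m l n (2 * (k - i))) * muT m l n i := by
  unfold xiT
  have h1 : (2 * k + 1) / 2 = k := by omega
  have h2 : (2 * k) / 2 = k := by omega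
  rw [h1, h2]
  have hc := choose_cancel m l n (m + ∑ p, n p) k
  have hsum : ∀ i ∈ Finset.range (k + 1),
      (alT m l n (2 * (k - i) + 1) + alT m l n (2 * (k - i))) * muT m l n i
        = alT m l n (2 * k + 1 - 2 * i) * muT m l n i + alT m l n (2 * k - 2 * i) * muT m l n i := by
    intro i hi
    rw [Finset.mem_range] at hi
    rw [add_mul, show 2 * (k - i) + 1 = 2 * k + 1 - 2 * i by omega,
      show 2 * (k - i) = 2 * k - 2 * i by omega]
  rw [Finset.sum_congr rfl hsum, Finset.sum_add_distrib]
  linear_combination hc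

/-- Being a `B`-linear combination of `ξ₁, …, ξ_m`. -/
def GoodT (x : MvPolynomial (Fin m ⊕ Σ p : Fin l, Fin (n p / 2)) (ZMod 2)) : Prop :=
  ∃ c : ℕ → MvPolynomial (Fin m ⊕ Σ p : Fin l, Fin (n p / 2)) (ZMod 2),
    (∀ i, c i ∈ BsubT m l n) ∧ x = ∑ i ∈ Finset.Icc 1 m, c i * xiT m l n i

lemma good_zero : GoodT m l n 0 :=
  ⟨0, fun _ => zero_mem _, by simp⟩

lemma good_add {x y : T} (hx : GoodT m l n x) (hy : GoodT m l n y) : GoodT m l n (x + y) := by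
  obtain ⟨c, hc, hcx⟩ := hx
  obtain ⟨d, hd, hdy⟩ := hy
  exact ⟨c + d, fun i => add_mem (hc i) (hd i), by
    rw [hcx, hdy, ← Finset.sum_add_distrib]
    exact Finset.sum_congr rfl fun i _ => by rw [Pi.add_apply, add_mul]⟩

lemma good_mul_left {x : T} (b : T) (hb : b ∈ BsubT m l n) (hx : GoodT m l n x) :
    GoodT m l n (b * x) := by
  obtain ⟨c, hc, hcx⟩ := hx
  exact ⟨fun i => b * c i, fun i => mul_mem hb (hc i), by
    rw [hcx, Finset.mul_sum]
    exact Finset.sum_congr rfl fun i _ => by rw [mul_assoc]⟩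

lemma good_xi {i : ℕ} (h1 : 1 ≤ i) (h2 : i ≤ m) : GoodT m l n (xiT m l n i) := by
  refine ⟨fun t => if t = i then 1 else 0, fun t => by dsimp only; split <;> [exact one_mem _; exact zero_mem _], ?_⟩
  rw [show (∑ t ∈ Finset.Icc 1 m, (if t = i then 1 else 0) * xiT m l n t)
      = ∑ t ∈ Finset.Icc 1 m, (if t = i then xiT m l n t else 0) from
    Finset.sum_congr rfl fun t _ => by split <;> simp,
    Finset.sum_ite_eq' (Finset.Icc 1 m) i, if_pos (Finset.mem_Icc.mpr ⟨h1, h2⟩)]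

lemma good_gamma : ∀ j : ℕ, 2 * j + 1 ≤ m →
    GoodT m l n (alT m l n (2 * j + 1) + alT m l n (2 * j)) := by
  intro j
  induction j using Nat.strong_induction_on with
  | _ j IH =>
    intro hj
    have key := xi_pair m l n j
    rw [Finset.sum_range_succ'] at key
    rw [Nat.sub_zero, muT_zero, mul_one] at key
    set S := ∑ i ∈ Finset.range j,
        (alT m l n (2 * (j - (i + 1)) + 1) + alT m l n (2 * (j - (i + 1)))) * muT m l n (i + 1)
      with hS
    have hγ : alT m l n (2 * j + 1) + alT m l n (2 * j)
        = (xiT m l n (2 * j + 1) + xiT m l n (2 * j)) + S := by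
      rw [key, add_right_comm, two_torsion, zero_add]
    rw [hγ]
    have g2 : GoodT m l n (xiT m l n (2 * j)) := by
      rcases Nat.eq_zero_or_pos j with h0 | h0
      · subst h0; rw [show 2 * 0 = 0 from rfl, xiT_zero]; exact good_zero m l n
      · exact good_xi m l n (by omega) (by omega)
    have gS : GoodT m l n S := by
      rw [hS]
      refine Finset.sum_induction _ _ (fun a b => good_add m l n) (good_zero m l n) ?_
      intro i hi
      rw [Finset.mem_range] at hi
      rw [mul_comm]
      exact good_mul_left m l n _ (muT_mem m l n (i + 1))
        (IH (j - (i + 1)) (by omega) (by omega))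
    exact good_add m l n (good_add m l n (good_xi m l n (by omega) hj) g2) gS

end Aux

/-- For `2j+1 ≤ m`, the element `α_{2j+1} + α_{2j}` is a `B`-linear combination of
`ξ₁, …, ξ_m`; in particular it lies in the ideal `(ξ₁, …, ξ_m)` of `T`. -/
theorem stmt_18 (m l : ℕ) (hm : 1 ≤ m) (hl : 1 ≤ l) (n : Fin l → ℕ) (hn : ∀ p, 1 ≤ n p)
    (j : ℕ) (hj : 2 * j + 1 ≤ m) :
    (∃ c : ℕ → MvPolynomial (Fin m ⊕ Σ p : Fin l, Fin (n p / 2)) (ZMod 2),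
      (∀ i, c i ∈ BsubT m l n) ∧
      alT m l n (2 * j + 1) + alT m l n (2 * j) = ∑ i ∈ Finset.Icc 1 m, c i * xiT m l n i) ∧
    alT m l n (2 * j + 1) + alT m l n (2 * j) ∈
      Ideal.span {x | ∃ i, 1 ≤ i ∧ i ≤ m ∧ x = xiT m l n i} := by
  obtain ⟨c, hc, hrep⟩ := good_gamma m l n j hj
  refine ⟨⟨c, hc, hrep⟩, ?_⟩
  rw [hrep]
  refine Ideal.sum_mem _ fun i hi => Ideal.mul_mem_left _ _ (Ideal.subset_span ?_)
  rw [Finset.mem_Icc] at hi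
  exact ⟨i, hi.1, hi.2, rfl⟩
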